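/- Proposition 6 (existence and uniqueness of the high threshold type): Let m₁*, m₂* be a strictly incentive compatible separating profile on [t̲, t'] with t' in the interior of T and m₁*(t') = M. If the lowest type strictly prefers her separating bundle to the pooled bundle, i.e., ℰ(t̲) − c(M, t̲) < u*(t̲), then there exists exactly one t_h ∈ (t̲, t'] such that u*(t_h) = ℰ(t_h) − c(M, t_h). -/

import Mathlib

open Set MeasureTheory
open Filter Topology

lemma contOn_setIntegral (tl th : ℝ) (G : Measure ℝ) [IsFiniteMeasure G]
    (hG_atomless : ∀ x : ℝ, G {x} = 0) (g : ℝ → ℝ) (hg : Continuous g) :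
    ContinuousOn (fun t => ∫ z in Icc t th, g z ∂G) (Ici tl) := by
  set μ := G.restrict (Icc tl th) with hμ
  obtain ⟨C, hC⟩ := isCompact_Icc.exists_bound_of_continuousOn
    (hg.continuousOn : ContinuousOn g (Icc tl th))
  have hFeq : ∀ t ∈ Ici tl, (∫ z in Icc t th, g z ∂G) = ∫ z, (Icc t th).indicator g z ∂μ := by
    intro t ht
    rw [integral_indicator measurableSet_Icc, hμ, Measure.restrict_restrict measurableSet_Icc,
      Set.inter_eq_left.2 (Icc_subset_Icc ht le_rfl)]
  have hFcont : Continuous (fun t => ∫ z, (Icc t th).indicator g z ∂μ) := by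
    rw [continuous_iff_continuousAt]
    intro t₀
    refine tendsto_integral_filter_of_dominated_convergence (fun _ => C) ?_ ?_ ?_ ?_
    · exact Eventually.of_forall fun t =>
        (hg.aestronglyMeasurable).indicator measurableSet_Icc
    · refine Eventually.of_forall fun t => ?_
      filter_upwards [ae_restrict_mem (μ := G) measurableSet_Icc] with z hz
      calc ‖(Icc t th).indicator g z‖ ≤ ‖g z‖ := norm_indicator_le_norm_self g z
        _ ≤ C := hC z hz
    · exact integrable_const C
    · have hnull : μ {t₀} = 0 := by
        rw [hμ, Measure.restrict_apply (measurableSet_singleton t₀)]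
        exact measure_mono_null Set.inter_subset_left (hG_atomless t₀)
      filter_upwards [compl_mem_ae_iff.2 hnull] with z hz
      have hzne : z ≠ t₀ := hz
      have hev : ∀ᶠ t in 𝓝 t₀, (Icc t th).indicator g z = (Icc t₀ th).indicator g z := by
        rcases lt_or_gt_of_ne hzne with hlt | hgt
        · filter_upwards [Ioi_mem_nhds hlt] with t ht
          rw [Set.indicator_of_notMem (fun hm => absurd hm.1 (not_le.2 ht)),
            Set.indicator_of_notMem (fun hm => absurd hm.1 (not_le.2 hlt))]
        · filter_upwards [Iio_mem_nhds hgt] with t ht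
          by_cases hzth : z ≤ th
          · rw [Set.indicator_of_mem (show z ∈ Icc t th from ⟨ht.le, hzth⟩) g,
              Set.indicator_of_mem (show z ∈ Icc t₀ th from ⟨hgt.le, hzth⟩) g]
          · rw [Set.indicator_of_notMem (fun hm => hzth hm.2),
              Set.indicator_of_notMem (fun hm => hzth hm.2)]
      exact tendsto_const_nhds.congr' (hev.mono fun t ht => ht.symm)
  intro t ht
  exact (hFcont.continuousAt.continuousWithinAt).congr
    (fun s hs => hFeq s hs) (hFeq t ht)


/-- Separating utility `u*(t) = α·m₂*(t) + f(m₁*(t), t) − c(m₁*(t), t) − h(m₂*(t))`. -/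
noncomputable def sepUtil (α : ℝ) (f c : ℝ → ℝ → ℝ) (h : ℝ → ℝ) (m1s m2s : ℝ → ℝ)
    (t : ℝ) : ℝ :=
  α * m2s t + f (m1s t) t - c (m1s t) t - h (m2s t)

/-- Pooled conditional expectation `ℰ(t) = E[f(M, z) | z ≥ t]` under the prior `G`. -/
noncomputable def pooledExp (th M : ℝ) (f : ℝ → ℝ → ℝ) (G : Measure ℝ) (t : ℝ) : ℝ :=
  (∫ z in Set.Icc t th, f M z ∂G) / (G (Set.Icc t th)).toReal

/-- Proposition 6 (existence and uniqueness of the high threshold type): given a strictly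
incentive compatible separating profile on `[tl, t']` with `m₁*(t') = M`, if the lowest
type strictly prefers her separating bundle to the pooled bundle, then there is exactly
one `t_h ∈ (tl, t']` at which the separating utility equals the pooled payoff. -/
theorem high_threshold_exists_unique
    (tl th M α : ℝ) (f c : ℝ → ℝ → ℝ) (h : ℝ → ℝ) (G : Measure ℝ)
    (t' : ℝ) (m1s m2s : ℝ → ℝ)
    (htl : 0 < tl) (htlth : tl < th) (hM : 0 < M) (hα : 0 ≤ α)
    -- the prior: an atomless Borel probability measure with full support on [tl, th]
    (hG_prob : IsProbabilityMeasure G)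
    (hG_atomless : ∀ x : ℝ, G {x} = 0)
    (hG_supp : G (Icc tl th) = 1)
    (hG_full : ∀ s : Set ℝ, IsOpen s → (s ∩ Icc tl th).Nonempty → 0 < G s)
    -- f is continuous and strictly increasing in t
    (hf_cont : Continuous fun p : ℝ × ℝ => f p.1 p.2)
    (hf_inc : ∀ a : ℝ, 0 ≤ a → StrictMonoOn (fun t => f a t) (Icc tl th))
    -- c is continuous and satisfies the strict single crossing property
    (hc_cont : Continuous fun p : ℝ × ℝ => c p.1 p.2)
    (hsc : ∀ a a' t t', a > a' → 0 ≤ a' → t ∈ Icc tl th → t' ∈ Icc tl th → t > t' →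
      c a t + c a' t' < c a t' + c a' t)
    -- h is continuous with h 0 = 0
    (hh_cont : Continuous h) (hh0 : h 0 = 0)
    -- t' is interior, and m1s, m2s form a separating profile on [tl, t']
    (ht' : t' ∈ Ioo tl th)
    (hm1_cont : ContinuousOn m1s (Icc tl t')) (hm2_cont : ContinuousOn m2s (Icc tl t'))
    (hfeas : ∀ t ∈ Icc tl t', 0 ≤ m1s t ∧ 0 ≤ m2s t ∧ m1s t + m2s t ≤ M)
    (hbelow : ∀ t ∈ Ico tl t', m1s t < M)
    (htop1 : m1s t' = M) (htop2 : m2s t' = 0)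
    -- strict incentive compatibility of the separating profile
    (hIC : ∀ t ∈ Icc tl t', ∀ s ∈ Icc tl t', t ≠ s →
      sepUtil α f c h m1s m2s t >
        α * m2s s + f (m1s s) s - c (m1s s) t - h (m2s s))
    -- the lowest type strictly prefers her separating bundle to the pooled bundle
    (hlow : pooledExp th M f G tl - c M tl < sepUtil α f c h m1s m2s tl) :
    ∃! t_h : ℝ, t_h ∈ Ioc tl t' ∧
      sepUtil α f c h m1s m2s t_h = pooledExp th M f G t_h - c M t_h := by
  haveI := hG_prob
  haveI : IsFiniteMeasureOnCompacts G := ⟨fun _ _ => measure_lt_top G _⟩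
  obtain ⟨htlt', ht'th⟩ := ht'
  have hfM_cont : Continuous (fun z => f M z) :=
    hf_cont.comp (continuous_const.prodMk continuous_id)
  have hGne : ∀ s : Set ℝ, G s ≠ ⊤ := fun s => measure_ne_top G s
  have hint : ∀ s e : ℝ, IntegrableOn (fun z => f M z) (Icc s e) G :=
    fun s e => hfM_cont.continuousOn.integrableOn_compact isCompact_Icc
  -- denominator positivity
  have hd_pos : ∀ t, t ≤ t' → 0 < (G (Icc t th)).toReal := by
    intro t hts
    have hopen : (0:ENNReal) < G (Ioo t' th) := hG_full _ isOpen_Ioo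
      ⟨(t'+th)/2, ⟨by linarith, by linarith⟩, ⟨by linarith, by linarith⟩⟩
    have hsub : Ioo t' th ⊆ Icc t th := fun x hx => ⟨le_trans hts hx.1.le, hx.2.le⟩
    exact ENNReal.toReal_pos (ne_of_gt (lt_of_lt_of_le hopen (measure_mono hsub))) (hGne _)
  have hmem_th : ∀ x, tl ≤ x → x ≤ t' → x ∈ Icc tl th := fun x h1 h2 => ⟨h1, le_trans h2 ht'th.le⟩
  -- monotonicity of pooled expectation
  have hmonoE : ∀ s t : ℝ, tl ≤ s → s ≤ t → t ≤ t' →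
      pooledExp th M f G s ≤ pooledExp th M f G t := by
    intro s t hs hst htt'
    have hste : Icc s th = Ico s t ∪ Icc t th :=
      (Ico_union_Icc_eq_Icc hst (by linarith)).symm
    have hdisj : Disjoint (Ico s t) (Icc t th) := by
      rw [Set.disjoint_left]; intro x hx hx2; exact absurd hx2.1 (not_le.2 hx.2)
    have hintA : IntegrableOn (fun z => f M z) (Ico s t) G :=
      (hint s t).mono_set Ico_subset_Icc_self
    have hNsplit : ∫ z in Icc s th, f M z ∂G
        = (∫ z in Ico s t, f M z ∂G) + ∫ z in Icc t th, f M z ∂G := by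
      rw [hste, setIntegral_union hdisj measurableSet_Icc hintA (hint t th)]
    have hdsplit : (G (Icc s th)).toReal = (G (Ico s t)).toReal + (G (Icc t th)).toReal := by
      rw [hste, measure_union hdisj measurableSet_Icc, ENNReal.toReal_add (hGne _) (hGne _)]
    have ha : 0 ≤ (G (Ico s t)).toReal := ENNReal.toReal_nonneg
    have hb : 0 < (G (Icc t th)).toReal := hd_pos t htt'
    have hA : (∫ z in Ico s t, f M z ∂G) ≤ f M t * (G (Ico s t)).toReal := by
      have h1 : (∫ z in Ico s t, f M z ∂G) ≤ ∫ _ in Ico s t, f M t ∂G :=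
        setIntegral_mono_on hintA (integrableOn_const (measure_ne_top G _))
          measurableSet_Ico (fun z hz => (hf_inc M hM.le).monotoneOn
            (hmem_th z (le_trans hs hz.1) (le_trans hz.2.le htt'))
            (hmem_th t (le_trans hs hst) htt') hz.2.le)
      rwa [setIntegral_const, smul_eq_mul, mul_comm] at h1
    have hB : f M t * (G (Icc t th)).toReal ≤ ∫ z in Icc t th, f M z ∂G := by
      rw [mul_comm, ← smul_eq_mul]
      refine setIntegral_ge_of_const_le measurableSet_Icc (hGne _) ?_ (hint t th)
      intro z hz
      exact (hf_inc M hM.le).monotoneOn (hmem_th t (le_trans hs hst) htt')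
        ⟨le_trans hs (le_trans hst hz.1), hz.2⟩ hz.1
    rw [pooledExp, pooledExp, div_le_div_iff₀ (by rw [hdsplit]; linarith) hb, hNsplit, hdsplit]
    nlinarith [hA, hB, ha, hb, mul_le_mul_of_nonneg_right hA hb.le,
      mul_le_mul_of_nonneg_right hB ha]
  -- pooled expectation strictly above f M t' at t'
  have hEt' : f M t' < pooledExp th M f G t' := by
    set m := (t'+th)/2 with hm
    have hmlt : t' < m := by rw [hm]; linarith
    have hmth : m < th := by rw [hm]; linarith
    have hpos : (0:ENNReal) < G (Icc m th) := lt_of_lt_of_le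
      (hG_full _ isOpen_Ioo ⟨(m+th)/2, ⟨by linarith, by linarith⟩, ⟨by linarith, by linarith⟩⟩)
      (measure_mono Ioo_subset_Icc_self)
    have hposr : 0 < (G (Icc m th)).toReal := ENNReal.toReal_pos (ne_of_gt hpos) (hGne _)
    have hste : Icc t' th = Ico t' m ∪ Icc m th := (Ico_union_Icc_eq_Icc hmlt.le hmth.le).symm
    have hdisj : Disjoint (Ico t' m) (Icc m th) := by
      rw [Set.disjoint_left]; intro x hx hx2; exact absurd hx2.1 (not_le.2 hx.2)
    have hintA : IntegrableOn (fun z => f M z) (Ico t' m) G :=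
      (hint t' m).mono_set Ico_subset_Icc_self
    have hNsplit : ∫ z in Icc t' th, f M z ∂G
        = (∫ z in Ico t' m, f M z ∂G) + ∫ z in Icc m th, f M z ∂G := by
      rw [hste, setIntegral_union hdisj measurableSet_Icc hintA (hint m th)]
    have hdsplit : (G (Icc t' th)).toReal = (G (Ico t' m)).toReal + (G (Icc m th)).toReal := by
      rw [hste, measure_union hdisj measurableSet_Icc, ENNReal.toReal_add (hGne _) (hGne _)]
    have hmemt' : t' ∈ Icc tl th := ⟨htlt'.le, ht'th.le⟩
    have hA : f M t' * (G (Ico t' m)).toReal ≤ ∫ z in Ico t' m, f M z ∂G := by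
      rw [mul_comm, ← smul_eq_mul]
      refine setIntegral_ge_of_const_le measurableSet_Ico (hGne _) ?_ hintA
      intro z hz
      exact (hf_inc M hM.le).monotoneOn hmemt' ⟨by linarith [hz.1], by linarith [hz.2]⟩ hz.1
    have hB : f M m * (G (Icc m th)).toReal ≤ ∫ z in Icc m th, f M z ∂G := by
      rw [mul_comm, ← smul_eq_mul]; exact setIntegral_ge_of_const_le measurableSet_Icc (hGne _)
        (fun z hz => (hf_inc M hM.le).monotoneOn ⟨by linarith, hmth.le⟩
          ⟨by linarith [hz.1], hz.2⟩ hz.1) (hint m th)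
    have hfm : f M t' < f M m := hf_inc M hM.le hmemt' ⟨by linarith, hmth.le⟩ hmlt
    rw [pooledExp, lt_div_iff₀ (hd_pos t' le_rfl)]
    rw [hNsplit, hdsplit]
    nlinarith [hA, hB, ENNReal.toReal_nonneg (a := G (Ico t' m)), hposr,
      mul_lt_mul_of_pos_right hfm hposr]
  -- continuity
  have hNcont : ContinuousOn (fun t => ∫ z in Icc t th, f M z ∂G) (Icc tl t') :=
    (contOn_setIntegral tl th G hG_atomless _ hfM_cont).mono (fun x hx => hx.1)
  have hdcont : ContinuousOn (fun t => (G (Icc t th)).toReal) (Icc tl t') := by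
    have h1 : ContinuousOn (fun t => ∫ _ in Icc t th, (1:ℝ) ∂G) (Icc tl t') :=
      (contOn_setIntegral tl th G hG_atomless _ continuous_const).mono (fun x hx => hx.1)
    refine h1.congr (fun t _ => ?_)
    beta_reduce
    rw [setIntegral_const, smul_eq_mul, mul_one, Measure.real]
  have hPcont : ContinuousOn (pooledExp th M f G) (Icc tl t') := by
    have := hNcont.div hdcont (fun x hx => ne_of_gt (hd_pos x hx.2))
    exact this
  have hcM_cont : Continuous (fun t => c M t) :=
    hc_cont.comp (continuous_const.prodMk continuous_id)
  have hucont : ContinuousOn (sepUtil α f c h m1s m2s) (Icc tl t') := by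
    have h1 : ContinuousOn (fun t => f (m1s t) t) (Icc tl t') :=
      hf_cont.comp_continuousOn (hm1_cont.prodMk continuousOn_id)
    have h2 : ContinuousOn (fun t => c (m1s t) t) (Icc tl t') :=
      hc_cont.comp_continuousOn (hm1_cont.prodMk continuousOn_id)
    have h3 : ContinuousOn (fun t => h (m2s t)) (Icc tl t') :=
      hh_cont.comp_continuousOn hm2_cont
    exact (((continuousOn_const.mul hm2_cont).add h1).sub h2).sub h3
  -- the gap function
  set D : ℝ → ℝ :=
    fun t => sepUtil α f c h m1s m2s t - (pooledExp th M f G t - c M t) with hD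
  have hanti : ∀ s ∈ Icc tl t', ∀ t ∈ Icc tl t', s < t → D t < D s := by
    intro s hs t ht hst
    have hIC' := hIC s hs t ht (ne_of_lt hst)
    have key1 : sepUtil α f c h m1s m2s t - sepUtil α f c h m1s m2s s
        < c (m1s t) s - c (m1s t) t := by
      simp only [sepUtil] at hIC' ⊢; linarith
    have hm1le : m1s t ≤ M := by
      obtain ⟨h1, h2, h3⟩ := hfeas t ht; linarith
    have hcomp : c M t + c (m1s t) s ≤ c M s + c (m1s t) t := by
      rcases eq_or_lt_of_le hm1le with heq | hlt
      · rw [heq]; linarith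
      · exact (hsc M (m1s t) t s hlt (hfeas t ht).1 (hmem_th t ht.1 ht.2)
          (hmem_th s hs.1 hs.2) hst).le
    have hE := hmonoE s t hs.1 hst.le ht.2
    simp only [hD]
    linarith
  have hDtl : 0 < D tl := by simp only [hD]; linarith
  have hDt' : D t' < 0 := by
    have hut' : sepUtil α f c h m1s m2s t' = f M t' - c M t' := by
      simp [sepUtil, htop1, htop2, hh0]
    simp only [hD, hut']; linarith
  have hDcont : ContinuousOn D (Icc tl t') :=
    hucont.sub (hPcont.sub hcM_cont.continuousOn)
  obtain ⟨x, hx, hDx⟩ := intermediate_value_Ioo' htlt'.le hDcont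
    (show (0:ℝ) ∈ Ioo (D t') (D tl) from ⟨hDt', hDtl⟩)
  refine ⟨x, ⟨⟨hx.1, hx.2.le⟩, by simp only [hD] at hDx; linarith⟩, ?_⟩
  rintro y ⟨hy, hyeq⟩
  have hDy : D y = 0 := by simp only [hD]; linarith
  have hxm : x ∈ Icc tl t' := ⟨hx.1.le, hx.2.le⟩
  have hym : y ∈ Icc tl t' := ⟨hy.1.le, hy.2⟩
  rcases lt_trichotomy y x with hlt | heq | hgt
  · exact absurd (hDx ▸ hDy ▸ hanti y hym x hxm hlt) (lt_irrefl 0)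
  · exact heq
  · exact absurd (hDx ▸ hDy ▸ hanti x hxm y hym hgt) (lt_irrefl 0)
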